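/- arXiv:2003.02696 — 2 statements merged into one kernel-verified Lean document; each statement's English description precedes it below -/
import Mathlib

section
/- For every ε > 0, γ > 0, and every list of targets ϑ̄ = (ϑ̄₁,…,ϑ̄ₙ) ∈ L²(I)ⁿ, the cost functional C_{ε,γ} has a minimizer in the admissible set 𝓐. Furthermore, any minimizer (h,α,ϑ) ∈ 𝓐 satisfies (max_{i=1,…,n}|h_i|)² ≤ Θ̄²/γ, where Θ̄² = Σ_{i=1}^n ∫₀¹ ϑ̄_i². -/
open MeasureTheory Set

noncomputable def edot (p q : ℝ × ℝ) : ℝ := p.1 * q.1 + p.2 * q.2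
noncomputable def enorm2 (p : ℝ × ℝ) : ℝ := Real.sqrt (p.1 ^ 2 + p.2 ^ 2)
noncomputable def Dmvec (v : ℝ) : ℝ × ℝ := (-Real.sin v, Real.cos v)

/-- Lebesgue measure on `I = (0,1)`. -/
noncomputable def mu01 : Measure ℝ := volume.restrict (Ioo 0 1)

/-- The Hilbert space `H^1_{0L}(I)` with norm `‖v‖² = ∫₀¹ (v')²`, modelled isometrically
by the space `L²(I)` of derivatives: an element is its derivative `g ∈ L²(I)`, the
corresponding function being `U g : t ↦ ∫₀ᵗ g`. -/
noncomputable abbrev E := Lp ℝ 2 mu01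

/-- The function of `H^1_{0L}(I)` with derivative `g`. -/
noncomputable def U (g : E) : ℝ → ℝ := fun t => ∫ s in Ioc 0 t, (g : ℝ → ℝ) s ∂mu01

/-- The admissible space `𝓗 = ℝ^{2n} × H^1_{0L}(I) × H^1_{0L}(I)ⁿ`. -/
noncomputable abbrev Hn (n : ℕ) := (Fin n → ℝ × ℝ) × E × (Fin n → E)

/-- Weak solution of the state equation `-ϑ'' − h·Dm(α+ϑ) = 0`, `ϑ(0)=0`, `ϑ'(1)=0`,
for the field `p`, design `a` and state `g` (all in derivative representation). -/
def IsStateSol (p : ℝ × ℝ) (a g : E) : Prop :=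
  ∀ w : E, (∫ s, (g : ℝ → ℝ) s * (w : ℝ → ℝ) s ∂mu01)
    - (∫ s, edot p (Dmvec (U a s + U g s)) * U w s ∂mu01) = 0

/-- The admissible set `𝓐`. -/
def Admissible {n : ℕ} (x : Hn n) : Prop := ∀ i, IsStateSol (x.1 i) x.2.1 (x.2.2 i)

/-- The cost functional `C_{ε,γ}`. -/
noncomputable def cost {n : ℕ} (tb : Fin n → ℝ → ℝ) (ε γ : ℝ) (x : Hn n) : ℝ :=
  (1 / 2) * ∑ i, (∫ s, (U (x.2.2 i) s - tb i s) ^ 2 ∂mu01)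
    + (ε / 2) * (∫ s, ((x.2.1 : ℝ → ℝ) s) ^ 2 ∂mu01)
    + (γ / 2) * ∑ i, (enorm2 (x.1 i)) ^ 2

open Filter Topology ENNReal NNReal

instance : Fact ((2:ℝ≥0∞) ≠ ⊤) := ⟨by norm_num⟩

lemma mu01_univ : mu01 Set.univ = 1 := by
  simp [mu01, Real.volume_Ioo]

instance : IsProbabilityMeasure mu01 := ⟨mu01_univ⟩

lemma mu01_le (s : Set ℝ) : mu01 s ≤ volume s := by
  simpa [mu01] using Measure.restrict_le_self (μ := volume) (s := Ioo (0:ℝ) 1) s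

-- second countability
set_option synthInstance.maxHeartbeats 1000000 in
instance Esc : SecondCountableTopology E := MeasureTheory.Lp.SecondCountableTopology

lemma inner_eq_integral (f g : E) : (inner ℝ f g : ℝ) = ∫ s, (f : ℝ → ℝ) s * (g : ℝ → ℝ) s ∂mu01 := by
  rw [L2.inner_def]
  congr 1
  funext s
  rw [RCLike.inner_apply', conj_trivial]

/-- indicator of `Ioc a b` as element of `E` -/
noncomputable def chi (a b : ℝ) : E :=
  indicatorConstLp 2 (measurableSet_Ioc (a := a) (b := b)) (measure_ne_top _ _) (1:ℝ)

lemma inner_chi (a b : ℝ) (g : E) :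
    (inner ℝ (chi a b) g : ℝ) = ∫ s in Ioc a b, (g : ℝ → ℝ) s ∂mu01 :=
  L2.inner_indicatorConstLp_one _ _ _

lemma U_eq_inner (g : E) (t : ℝ) : U g t = (inner ℝ (chi 0 t) g : ℝ) := (inner_chi 0 t g).symm

lemma norm_chi_le (a b : ℝ) : ‖chi a b‖ ≤ Real.sqrt (max (b - a) 0) := by
  rw [chi, norm_indicatorConstLp (by norm_num) (by norm_num)]
  simp only [norm_one, one_mul]
  rw [Real.sqrt_eq_rpow]
  have h2 : ENNReal.toReal 2 = 2 := by norm_num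
  rw [h2]
  norm_num
  refine Real.rpow_le_rpow ENNReal.toReal_nonneg ?_ (by norm_num)
  have h1 : mu01 (Ioc a b) ≤ ENNReal.ofReal (b - a) := by
    refine (mu01_le _).trans ?_
    simp [Real.volume_Ioc]
  have h3 := ENNReal.toReal_mono (by simp) h1
  refine h3.trans ?_
  rcases le_or_gt 0 (b - a) with h | h
  · rw [ENNReal.toReal_ofReal h]; exact le_sup_left
  · rw [ENNReal.ofReal_of_nonpos h.le]; simp

lemma U_zero_of_nonpos (g : E) {t : ℝ} (ht : t ≤ 0) : U g t = 0 := by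
  rw [U, Ioc_eq_empty (not_lt.2 ht), Measure.restrict_empty]
  simp

lemma U_diff (g : E) {a b : ℝ} (hab : a ≤ b) (ha : 0 ≤ a) :
    U g b - U g a = ∫ s in Ioc a b, (g : ℝ → ℝ) s ∂mu01 := by
  rw [U, U]
  have hsplit : Ioc (0:ℝ) b = Ioc 0 a ∪ Ioc a b := (Ioc_union_Ioc_eq_Ioc ha hab).symm
  rw [hsplit, setIntegral_union (Ioc_disjoint_Ioc_of_le le_rfl) measurableSet_Ioc
    (integrableOn_Lp_of_measure_ne_top g fact_one_le_two_ennreal.elim (measure_ne_top _ _))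
    (integrableOn_Lp_of_measure_ne_top g fact_one_le_two_ennreal.elim (measure_ne_top _ _))]
  ring

lemma abs_setIntegral_le (g : E) (a b : ℝ) :
    |∫ s in Ioc a b, (g : ℝ → ℝ) s ∂mu01| ≤ ‖g‖ * Real.sqrt (max (b - a) 0) := by
  rw [← inner_chi]
  calc |(inner ℝ (chi a b) g : ℝ)| ≤ ‖chi a b‖ * ‖g‖ := abs_real_inner_le_norm _ _
  _ ≤ Real.sqrt (max (b - a) 0) * ‖g‖ := by
      exact mul_le_mul_of_nonneg_right (norm_chi_le a b) (norm_nonneg g)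
  _ = _ := mul_comm _ _

lemma U_sub_le (g : E) {a b : ℝ} (hab : a ≤ b) (ha : 0 ≤ a) :
    |U g b - U g a| ≤ ‖g‖ * Real.sqrt (b - a) := by
  rw [U_diff g hab ha]
  have := abs_setIntegral_le g a b
  rwa [max_eq_left (by linarith)] at this

lemma U_abs_le (g : E) {t : ℝ} (ht : 0 ≤ t) (ht1 : t ≤ 1) : |U g t| ≤ ‖g‖ := by
  have h := U_sub_le g ht (le_refl 0)
  rw [U_zero_of_nonpos g (le_refl 0), sub_zero, sub_zero] at h
  refine h.trans ?_
  have : Real.sqrt t ≤ 1 := by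
    rw [show (1:ℝ) = Real.sqrt 1 by simp]
    exact Real.sqrt_le_sqrt ht1
  nlinarith [norm_nonneg g]

lemma U_zero (t : ℝ) : U (0 : E) t = 0 := by
  rw [U]
  have h0 : ((0:E) : ℝ → ℝ) =ᵐ[mu01.restrict (Ioc 0 t)] (fun _ => (0:ℝ)) :=
    ae_restrict_of_ae (Lp.coeFn_zero ℝ 2 mu01)
  rw [integral_congr_ae h0]
  simp

lemma U_continuousOn (g : E) : ContinuousOn (U g) (Ioo 0 1) := by
  intro x hx
  rw [Metric.continuousWithinAt_iff]
  intro ε hε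
  rcases eq_or_ne g 0 with rfl | hg
  · refine ⟨1, one_pos, fun y hy hxy => ?_⟩
    simp [Real.dist_eq, U_zero, hε]
  · have hgn : (0:ℝ) < ‖g‖ := norm_pos_iff.2 hg
    refine ⟨(ε / ‖g‖) ^ 2, pow_pos (div_pos hε hgn) 2, fun y hy hxy => ?_⟩
    have hb : |U g y - U g x| ≤ ‖g‖ * Real.sqrt |y - x| := by
      rcases le_total x y with h | h
      · rw [abs_of_nonneg (sub_nonneg.2 h)]
        exact U_sub_le g h hx.1.le
      · rw [abs_sub_comm y x, abs_of_nonneg (sub_nonneg.2 h), abs_sub_comm (U g y) (U g x)]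
        exact U_sub_le g h hy.1.le
    rw [Real.dist_eq]
    refine lt_of_le_of_lt hb ?_
    rw [Real.dist_eq] at hxy
    have : Real.sqrt |y - x| < ε / ‖g‖ := by
      rw [show ε / ‖g‖ = Real.sqrt ((ε / ‖g‖)^2) by rw [Real.sqrt_sq (by positivity)]]
      exact Real.sqrt_lt_sqrt (abs_nonneg _) hxy
    calc ‖g‖ * Real.sqrt |y - x| < ‖g‖ * (ε / ‖g‖) := by
          exact mul_lt_mul_of_pos_left this hgn
    _ = ε := by field_simp

lemma enorm2_nonneg (p : ℝ × ℝ) : 0 ≤ enorm2 p := Real.sqrt_nonneg _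

lemma abs_edot_Dmvec_le (p : ℝ × ℝ) (v : ℝ) : |edot p (Dmvec v)| ≤ enorm2 p := by
  rw [edot, Dmvec, enorm2]
  simp only
  have h1 := Real.sin_sq_add_cos_sq v
  have h2 : (p.1 * -Real.sin v + p.2 * Real.cos v) ^ 2 ≤ p.1 ^ 2 + p.2 ^ 2 := by
    nlinarith [sq_nonneg (p.1 * Real.cos v + p.2 * Real.sin v)]
  have h3 := Real.sq_sqrt (by positivity : (0:ℝ) ≤ p.1 ^ 2 + p.2 ^ 2)
  have h4 := Real.sqrt_nonneg (p.1 ^ 2 + p.2 ^ 2)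
  rw [abs_le]
  constructor <;> nlinarith

lemma continuous_edot_Dmvec : Continuous (fun q : (ℝ × ℝ) × ℝ => edot q.1 (Dmvec q.2)) := by
  unfold edot Dmvec
  fun_prop

lemma continuous_enorm2 : Continuous enorm2 := by
  unfold enorm2
  fun_prop

lemma norm_le_enorm2 (p : ℝ × ℝ) : ‖p‖ ≤ enorm2 p := by
  rw [Prod.norm_def, enorm2]
  rw [max_le_iff]
  constructor <;> 
  · rw [Real.norm_eq_abs, ← Real.sqrt_sq_eq_abs]
    exact Real.sqrt_le_sqrt (by nlinarith)

/-- the field integrand is measurable and integrable -/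
lemma field_aesm (p : ℝ × ℝ) (a g : E) :
    AEStronglyMeasurable (fun s => edot p (Dmvec (U a s + U g s))) mu01 := by
  have hc : ContinuousOn (fun s => edot p (Dmvec (U a s + U g s))) (Ioo 0 1) := by
    have := ((U_continuousOn a).add (U_continuousOn g))
    exact (continuous_edot_Dmvec.comp_continuousOn (continuousOn_const.prodMk this))
  exact ContinuousOn.aestronglyMeasurable hc measurableSet_Ioo

lemma UW_aesm (w : E) : AEStronglyMeasurable (U w) mu01 :=
  (U_continuousOn w).aestronglyMeasurable measurableSet_Ioo

lemma ae_mem_Ioo : ∀ᵐ s ∂mu01, s ∈ Ioo (0:ℝ) 1 := ae_restrict_mem measurableSet_Ioo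

lemma U_abs_le' (g : E) {s : ℝ} (hs : s ∈ Ioo (0:ℝ) 1) : |U g s| ≤ ‖g‖ :=
  U_abs_le g hs.1.le hs.2.le

lemma field_integrable (p : ℝ × ℝ) (a g w : E) :
    Integrable (fun s => edot p (Dmvec (U a s + U g s)) * U w s) mu01 := by
  refine ⟨((field_aesm p a g).mul (UW_aesm w)), ?_⟩
  refine HasFiniteIntegral.of_bounded (C := enorm2 p * ‖w‖) ?_
  filter_upwards [ae_mem_Ioo] with s hs
  rw [Real.norm_eq_abs, abs_mul]
  exact mul_le_mul (abs_edot_Dmvec_le p _) (U_abs_le' w hs) (abs_nonneg _) (enorm2_nonneg p)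

lemma integral_mul_coe (g w : E) :
    (∫ s, (g : ℝ → ℝ) s * (w : ℝ → ℝ) s ∂mu01) = (inner ℝ g w : ℝ) := (inner_eq_integral g w).symm

/-- a priori estimate: any weak solution satisfies `‖g‖ ≤ |p|`. -/
lemma norm_le_of_isStateSol {p : ℝ × ℝ} {a g : E} (h : IsStateSol p a g) : ‖g‖ ≤ enorm2 p := by
  have hg := h g
  have h1 : (∫ s, (g : ℝ → ℝ) s * (g : ℝ → ℝ) s ∂mu01) = ‖g‖ ^ 2 := by
    rw [integral_mul_coe]; exact real_inner_self_eq_norm_sq g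
  have h2 : |∫ s, edot p (Dmvec (U a s + U g s)) * U g s ∂mu01| ≤ enorm2 p * ‖g‖ := by
    rw [← Real.norm_eq_abs]
    refine (norm_integral_le_integral_norm _).trans ?_
    have hb : (∫ s, ‖edot p (Dmvec (U a s + U g s)) * U g s‖ ∂mu01)
        ≤ ∫ _, enorm2 p * ‖g‖ ∂mu01 := by
      refine integral_mono_ae ((field_integrable p a g g).norm) (integrable_const _) ?_
      filter_upwards [ae_mem_Ioo] with s hs
      rw [Real.norm_eq_abs, abs_mul]
      exact mul_le_mul (abs_edot_Dmvec_le p _) (U_abs_le' g hs) (abs_nonneg _) (enorm2_nonneg p)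
    refine hb.trans ?_
    rw [integral_const]
    simp
  have h3 : ‖g‖ ^ 2 ≤ enorm2 p * ‖g‖ := by
    rw [← h1, sub_eq_zero.1 hg]
    exact (le_abs_self _).trans h2
  rcases eq_or_lt_of_le (norm_nonneg g) with h0 | h0
  · rw [← h0]; exact enorm2_nonneg p
  · nlinarith

lemma isStateSol_zero : IsStateSol 0 0 0 := by
  intro w
  have h1 : (∫ s, ((0:E) : ℝ → ℝ) s * (w : ℝ → ℝ) s ∂mu01) = 0 := by
    rw [integral_mul_coe, inner_zero_left]
  have h2 : ∀ s : ℝ, edot (0 : ℝ × ℝ) (Dmvec (U (0:E) s + U (0:E) s)) * U w s = 0 := by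
    intro s; simp [edot]
  rw [h1]
  simp only [h2]
  simp

section WeakBW
variable {H : Type*} [NormedAddCommGroup H] [InnerProductSpace ℝ H] [CompleteSpace H]
  [SecondCountableTopology H]

lemma weak_bw {R : ℝ} (hR : 0 ≤ R) (u : ℕ → H) (hu : ∀ k, ‖u k‖ ≤ R) :
    ∃ (v : H) (φ : ℕ → ℕ), StrictMono φ ∧ ‖v‖ ≤ R ∧
      ∀ w : H, Tendsto (fun k => (inner ℝ (u (φ k)) w : ℝ)) atTop (𝓝 (inner ℝ v w : ℝ)) := by
  have : Nonempty H := ⟨0⟩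
  set d : ℕ → H := TopologicalSpace.denseSeq H with hd_def
  have hd : DenseRange d := TopologicalSpace.denseRange_denseSeq H
  set S : Set (ℕ → ℝ) := Set.univ.pi (fun j => Icc (-(R * ‖d j‖)) (R * ‖d j‖)) with hS_def
  have hS : IsCompact S := isCompact_univ_pi (fun j => isCompact_Icc)
  have hmem : ∀ k, (fun j => (inner ℝ (u k) (d j) : ℝ)) ∈ S := by
    intro k j _
    have h1 : |(inner ℝ (u k) (d j) : ℝ)| ≤ R * ‖d j‖ :=
      (abs_real_inner_le_norm _ _).trans
        (mul_le_mul_of_nonneg_right (hu k) (norm_nonneg _))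
    rw [abs_le] at h1
    exact ⟨h1.1, h1.2⟩
  obtain ⟨L, -, φ, hφ, hlim⟩ := hS.isSeqCompact hmem
  have hj : ∀ j, Tendsto (fun k => (inner ℝ (u (φ k)) (d j) : ℝ)) atTop (𝓝 (L j)) := by
    intro j
    exact (tendsto_pi_nhds.1 hlim) j
  -- Cauchy for arbitrary w
  have hcauchy : ∀ w : H, CauchySeq (fun k => (inner ℝ (u (φ k)) w : ℝ)) := by
    intro w
    rw [Metric.cauchySeq_iff]
    intro ε hε
    have hR1 : (0:ℝ) < R + 1 := by linarith
    obtain ⟨j, hj'⟩ := hd.exists_dist_lt w (by positivity : (0:ℝ) < ε / (4 * (R + 1)))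
    obtain ⟨N, hN⟩ := Metric.cauchySeq_iff.1 (hj j).cauchySeq (ε/2) (by positivity)
    refine ⟨N, fun m hm k hk => ?_⟩
    have key : ∀ l, |(inner ℝ (u (φ l)) w : ℝ) - (inner ℝ (u (φ l)) (d j) : ℝ)| ≤ ε / 4 := by
      intro l
      rw [← inner_sub_right]
      refine (abs_real_inner_le_norm _ _).trans ?_
      have h2 : ‖w - d j‖ < ε / (4 * (R + 1)) := by
        rw [← dist_eq_norm]; exact hj'
      calc ‖u (φ l)‖ * ‖w - d j‖ ≤ R * (ε / (4 * (R + 1))) :=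
            mul_le_mul (hu _) h2.le (norm_nonneg _) hR
      _ ≤ ε / 4 := by
        have h5 : R / (R + 1) ≤ 1 := by
          rw [div_le_one hR1]; linarith
        have h6 : R * (ε / (4 * (R + 1))) = ε / 4 * (R / (R + 1)) := by
          field_simp
        rw [h6]
        nlinarith
    have h3 := hN m hm k hk
    rw [Real.dist_eq] at h3 ⊢
    have k1 := key m; have k2 := key k
    have k2' : |(inner ℝ (u (φ k)) (d j) : ℝ) - (inner ℝ (u (φ k)) w : ℝ)| ≤ ε / 4 := by
      rw [abs_sub_comm]; exact k2
    have t1 := abs_sub_le ((inner ℝ (u (φ m)) w : ℝ)) ((inner ℝ (u (φ m)) (d j) : ℝ))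
      ((inner ℝ (u (φ k)) w : ℝ))
    have t2 := abs_sub_le ((inner ℝ (u (φ m)) (d j) : ℝ)) ((inner ℝ (u (φ k)) (d j) : ℝ))
      ((inner ℝ (u (φ k)) w : ℝ))
    linarith
  have hex : ∀ w : H, ∃ l : ℝ, Tendsto (fun k => (inner ℝ (u (φ k)) w : ℝ)) atTop (𝓝 l) :=
    fun w => cauchySeq_tendsto_of_complete (hcauchy w)
  choose T0 hT using hex
  have hmap_add : ∀ x y, T0 (x + y) = T0 x + T0 y := by
    intro x y
    refine tendsto_nhds_unique ?_ ((hT x).add (hT y))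
    have : (fun k => (inner ℝ (u (φ k)) (x + y) : ℝ))
        = fun k => (inner ℝ (u (φ k)) x : ℝ) + (inner ℝ (u (φ k)) y : ℝ) := by
      funext k; rw [inner_add_right]
    rw [← this]
    exact hT (x + y)
  have hmap_smul : ∀ (c : ℝ) x, T0 (c • x) = c * T0 x := by
    intro c x
    refine tendsto_nhds_unique ?_ ((hT x).const_mul c)
    have : (fun k => (inner ℝ (u (φ k)) (c • x) : ℝ))
        = fun k => c * (inner ℝ (u (φ k)) x : ℝ) := by
      funext k; rw [inner_smul_right]
    rw [← this]
    exact hT (c • x)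
  have hbound : ∀ w, ‖T0 w‖ ≤ R * ‖w‖ := by
    intro w
    rw [Real.norm_eq_abs]
    have habs : Tendsto (fun k => |(inner ℝ (u (φ k)) w : ℝ)|) atTop (𝓝 |T0 w|) := (hT w).abs
    refine le_of_tendsto habs (Eventually.of_forall fun k => ?_)
    exact (abs_real_inner_le_norm _ _).trans
      (mul_le_mul_of_nonneg_right (hu _) (norm_nonneg _))
  let Tl : H →ₗ[ℝ] ℝ :=
    { toFun := T0, map_add' := hmap_add, map_smul' := hmap_smul }
  let Tc : H →L[ℝ] ℝ := Tl.mkContinuous R hbound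
  refine ⟨(InnerProductSpace.toDual ℝ H).symm Tc, φ, hφ, ?_, ?_⟩
  · rw [LinearIsometryEquiv.norm_map]
    exact Tl.mkContinuous_norm_le hR hbound
  · intro w
    have : (inner ℝ ((InnerProductSpace.toDual ℝ H).symm Tc) w : ℝ) = Tc w :=
      InnerProductSpace.toDual_symm_apply
    rw [this]
    exact hT w

lemma weak_bw_fin (n : ℕ) {R : ℝ} (hR : 0 ≤ R) (u : ℕ → Fin n → H)
    (hu : ∀ k i, ‖u k i‖ ≤ R) :
    ∃ (v : Fin n → H) (φ : ℕ → ℕ), StrictMono φ ∧ (∀ i, ‖v i‖ ≤ R) ∧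
      ∀ i (w : H), Tendsto (fun k => (inner ℝ (u (φ k) i) w : ℝ)) atTop (𝓝 (inner ℝ (v i) w : ℝ)) := by
  induction n with
  | zero => exact ⟨Fin.elim0, id, strictMono_id, fun i => i.elim0, fun i => i.elim0⟩
  | succ m ih =>
    obtain ⟨v₁, φ₁, hφ₁, hv₁, hlim₁⟩ := ih (fun k i => u k i.castSucc) (fun k i => hu k _)
    obtain ⟨vl, φ₂, hφ₂, hvl, hliml⟩ := weak_bw hR (fun k => u (φ₁ k) (Fin.last m))
      (fun k => hu _ _)
    refine ⟨Fin.snoc v₁ vl, φ₁ ∘ φ₂, hφ₁.comp hφ₂, ?_, ?_⟩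
    · intro i
      refine Fin.lastCases ?_ ?_ i
      · rw [Fin.snoc_last]; exact hvl
      · intro j; rw [Fin.snoc_castSucc]; exact hv₁ j
    · intro i w
      refine Fin.lastCases ?_ ?_ i
      · rw [Fin.snoc_last]; exact hliml w
      · intro j
        rw [Fin.snoc_castSucc]
        exact (hlim₁ j w).comp (hφ₂.tendsto_atTop)

end WeakBW

/-- weak convergence gives pointwise convergence of the primitives `U`. -/
lemma tendsto_U_of_weak {g : ℕ → E} {gl : E}
    (h : ∀ w : E, Tendsto (fun k => (inner ℝ (g k) w : ℝ)) atTop (𝓝 (inner ℝ gl w : ℝ)))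
    (t : ℝ) : Tendsto (fun k => U (g k) t) atTop (𝓝 (U gl t)) := by
  have h1 : ∀ k, U (g k) t = (inner ℝ (g k) (chi 0 t) : ℝ) := by
    intro k; rw [U_eq_inner, real_inner_comm]
  have h2 : U gl t = (inner ℝ gl (chi 0 t) : ℝ) := by rw [U_eq_inner, real_inner_comm]
  simp only [h1, h2]
  exact h (chi 0 t)

/-- passing to the limit in the state equation. -/
lemma isStateSol_limit {p : ℕ → ℝ × ℝ} {pl : ℝ × ℝ} {C : ℝ}
    {a : ℕ → E} {al : E} {g : ℕ → E} {gl : E}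
    (hp : Tendsto p atTop (𝓝 pl)) (hC : ∀ k, enorm2 (p k) ≤ C)
    (ha : ∀ w : E, Tendsto (fun k => (inner ℝ (a k) w : ℝ)) atTop (𝓝 (inner ℝ al w : ℝ)))
    (hg : ∀ w : E, Tendsto (fun k => (inner ℝ (g k) w : ℝ)) atTop (𝓝 (inner ℝ gl w : ℝ)))
    (hsol : ∀ k, IsStateSol (p k) (a k) (g k)) : IsStateSol pl al gl := by
  intro w
  have hA : Tendsto (fun k => ∫ s, ((g k : ℝ → ℝ)) s * (w : ℝ → ℝ) s ∂mu01) atTop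
      (𝓝 (∫ s, (gl : ℝ → ℝ) s * (w : ℝ → ℝ) s ∂mu01)) := by
    simp only [integral_mul_coe]
    exact hg w
  have hB : Tendsto (fun k => ∫ s, edot (p k) (Dmvec (U (a k) s + U (g k) s)) * U w s ∂mu01)
      atTop (𝓝 (∫ s, edot pl (Dmvec (U al s + U gl s)) * U w s ∂mu01)) := by
    refine tendsto_integral_of_dominated_convergence (bound := fun _ => C * ‖w‖)
      (fun k => (field_aesm (p k) (a k) (g k)).mul (UW_aesm w)) (integrable_const _) ?_ ?_
    · intro k
      filter_upwards [ae_mem_Ioo] with s hs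
      rw [Real.norm_eq_abs, abs_mul]
      exact mul_le_mul ((abs_edot_Dmvec_le _ _).trans (hC k)) (U_abs_le' w hs) (abs_nonneg _)
        ((enorm2_nonneg _).trans (hC 0))
    · refine Eventually.of_forall fun s => ?_
      have hv : Tendsto (fun k => U (a k) s + U (g k) s) atTop (𝓝 (U al s + U gl s)) :=
        (tendsto_U_of_weak ha s).add (tendsto_U_of_weak hg s)
      have := (continuous_edot_Dmvec.tendsto (pl, U al s + U gl s)).comp (hp.prodMk_nhds hv)
      exact this.mul_const (U w s)
  have h0 : Tendsto (fun k => (∫ s, ((g k : ℝ → ℝ)) s * (w : ℝ → ℝ) s ∂mu01)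
      - ∫ s, edot (p k) (Dmvec (U (a k) s + U (g k) s)) * U w s ∂mu01) atTop
      (𝓝 ((∫ s, (gl : ℝ → ℝ) s * (w : ℝ → ℝ) s ∂mu01)
      - ∫ s, edot pl (Dmvec (U al s + U gl s)) * U w s ∂mu01)) := hA.sub hB
  have h1 : (fun k => (∫ s, ((g k : ℝ → ℝ)) s * (w : ℝ → ℝ) s ∂mu01)
      - ∫ s, edot (p k) (Dmvec (U (a k) s + U (g k) s)) * U w s ∂mu01) = fun _ => (0:ℝ) := by
    funext k; exact hsol k w
  rw [h1] at h0
  exact tendsto_nhds_unique h0 tendsto_const_nhds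

/-- convergence of the tracking term. -/
lemma tendsto_tracking {g : ℕ → E} {gl : E} {C : ℝ} {tb : ℝ → ℝ} (htb : MemLp tb 2 mu01)
    (hC : ∀ k, ‖g k‖ ≤ C)
    (hg : ∀ w : E, Tendsto (fun k => (inner ℝ (g k) w : ℝ)) atTop (𝓝 (inner ℝ gl w : ℝ))) :
    Tendsto (fun k => ∫ s, (U (g k) s - tb s) ^ 2 ∂mu01) atTop
      (𝓝 (∫ s, (U gl s - tb s) ^ 2 ∂mu01)) := by
  have hmeas : ∀ (h : E), AEStronglyMeasurable (fun s => (U h s - tb s) ^ 2) mu01 := by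
    intro h
    have h1 : AEStronglyMeasurable (fun s => U h s - tb s) mu01 := (UW_aesm h).sub htb.1
    have : (fun s => (U h s - tb s) ^ 2) = fun s => (U h s - tb s) * (U h s - tb s) := by
      funext s; ring
    rw [this]; exact h1.mul h1
  have hbnd : Integrable (fun s => (C + |tb s|) ^ 2) mu01 := by
    have heq : (fun s => (C + |tb s|) ^ 2)
        = fun s => C ^ 2 + (2 * C) * |tb s| + tb s ^ 2 := by
      funext s
      have : |tb s| ^ 2 = tb s ^ 2 := sq_abs _
      nlinarith [this]
    rw [heq]
    exact ((integrable_const _).add (((htb.integrable one_le_two).abs).const_mul _)).add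
      htb.integrable_sq
  refine tendsto_integral_of_dominated_convergence (bound := fun s => (C + |tb s|) ^ 2)
    (fun k => hmeas _) hbnd ?_ ?_
  · intro k
    filter_upwards [ae_mem_Ioo] with s hs
    rw [Real.norm_eq_abs, abs_le]
    have h1 : |U (g k) s| ≤ C := (U_abs_le' _ hs).trans (hC k)
    have h2 : 0 ≤ C := (norm_nonneg _).trans (hC 0)
    have h3 := abs_nonneg (tb s)
    have h4 : |U (g k) s - tb s| ≤ C + |tb s| := by
      refine (abs_sub _ _).trans ?_
      linarith
    constructor <;> nlinarith [abs_le.1 h4, sq_abs (U (g k) s - tb s), sq_nonneg (U (g k) s - tb s)]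
  · refine Eventually.of_forall fun s => ?_
    exact (((tendsto_U_of_weak hg s).sub tendsto_const_nhds).pow 2)

lemma integral_sq_eq (a : E) : (∫ s, ((a : ℝ → ℝ) s) ^ 2 ∂mu01) = ‖a‖ ^ 2 := by
  have : (fun s => ((a : ℝ → ℝ) s) ^ 2) = fun s => (a : ℝ → ℝ) s * (a : ℝ → ℝ) s := by
    funext s; ring
  rw [this, integral_mul_coe, real_inner_self_eq_norm_sq]

section Main

variable {n : ℕ} (tb : Fin n → ℝ → ℝ) (ε γ : ℝ)

noncomputable def zeroX : Hn n := ⟨fun _ => 0, 0, fun _ => 0⟩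

lemma zeroX_admissible : Admissible (zeroX (n := n)) := fun _ => isStateSol_zero

lemma enorm2_zero : enorm2 (0 : ℝ × ℝ) = 0 := by simp [enorm2]

lemma cost_zeroX : cost tb ε γ (zeroX (n := n))
    = (1 / 2) * ∑ i, (∫ s, (tb i s) ^ 2 ∂mu01) := by
  rw [cost]
  have h1 : ∀ i : Fin n, (∫ s, (U ((zeroX (n := n)).2.2 i) s - tb i s) ^ 2 ∂mu01)
      = ∫ s, (tb i s) ^ 2 ∂mu01 := by
    intro i
    congr 1
    funext s
    rw [show (zeroX (n := n)).2.2 i = 0 from rfl, U_zero]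
    ring
  have h2 : (∫ s, (((zeroX (n := n)).2.1 : ℝ → ℝ) s) ^ 2 ∂mu01) = 0 := by
    rw [show (zeroX (n := n)).2.1 = 0 from rfl, integral_sq_eq]
    simp
  simp only [h1, h2, show ∀ i : Fin n, (zeroX (n := n)).1 i = 0 from fun _ => rfl, enorm2_zero]
  simp

variable {tb ε γ}

lemma tracking_nonneg (g : E) (f : ℝ → ℝ) : 0 ≤ ∫ s, (U g s - f s) ^ 2 ∂mu01 :=
  integral_nonneg fun s => sq_nonneg _

lemma cost_nonneg (hε : 0 ≤ ε) (hγ : 0 ≤ γ) (x : Hn n) : 0 ≤ cost tb ε γ x := by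
  rw [cost]
  have h1 : (0:ℝ) ≤ ∑ i, (∫ s, (U (x.2.2 i) s - tb i s) ^ 2 ∂mu01) :=
    Finset.sum_nonneg fun i _ => tracking_nonneg _ _
  have h2 : (0:ℝ) ≤ (∫ s, ((x.2.1 : ℝ → ℝ) s) ^ 2 ∂mu01) := by
    rw [integral_sq_eq]; positivity
  have h3 : (0:ℝ) ≤ ∑ i, (enorm2 (x.1 i)) ^ 2 :=
    Finset.sum_nonneg fun i _ => sq_nonneg _
  positivity

/-- single γ-term bounded by cost -/
lemma gamma_term_le (hε : 0 ≤ ε) (hγ : 0 ≤ γ) (x : Hn n) (i : Fin n) :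
    (γ / 2) * (enorm2 (x.1 i)) ^ 2 ≤ cost tb ε γ x := by
  rw [cost]
  have h1 : (0:ℝ) ≤ ∑ i, (∫ s, (U (x.2.2 i) s - tb i s) ^ 2 ∂mu01) :=
    Finset.sum_nonneg fun i _ => tracking_nonneg _ _
  have h2 : (0:ℝ) ≤ (∫ s, ((x.2.1 : ℝ → ℝ) s) ^ 2 ∂mu01) := by
    rw [integral_sq_eq]; positivity
  have h3 : (enorm2 (x.1 i)) ^ 2 ≤ ∑ j, (enorm2 (x.1 j)) ^ 2 :=
    Finset.single_le_sum (f := fun j => (enorm2 (x.1 j)) ^ 2) (fun j _ => sq_nonneg _)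
      (Finset.mem_univ i)
  nlinarith

lemma alpha_term_le (hε : 0 ≤ ε) (hγ : 0 ≤ γ) (x : Hn n) :
    (ε / 2) * ‖x.2.1‖ ^ 2 ≤ cost tb ε γ x := by
  rw [cost]
  have h1 : (0:ℝ) ≤ ∑ i, (∫ s, (U (x.2.2 i) s - tb i s) ^ 2 ∂mu01) :=
    Finset.sum_nonneg fun i _ => tracking_nonneg _ _
  have h3 : (0:ℝ) ≤ ∑ j, (enorm2 (x.1 j)) ^ 2 :=
    Finset.sum_nonneg fun i _ => sq_nonneg _
  rw [integral_sq_eq]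
  nlinarith

end Main


/-- Theorem `min` (i): for all `ε, γ > 0` and targets in `L²(I)ⁿ`, the
cost `C_{ε,γ}` has a minimizer in `𝓐`, and every minimizer satisfies
`(max_i |h_i|)² ≤ Θ̄²/γ` where `Θ̄² = Σᵢ ∫₀¹ ϑ̄ᵢ²`. -/
theorem cost_has_minimizer (n : ℕ) (ε γ : ℝ) (hε : 0 < ε) (hγ : 0 < γ)
    (tb : Fin n → ℝ → ℝ) (htb : ∀ i, MemLp (tb i) 2 mu01) :
    (∃ x : Hn n, Admissible x ∧ ∀ y : Hn n, Admissible y →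
        cost tb ε γ x ≤ cost tb ε γ y) ∧
    (∀ x : Hn n, Admissible x → (∀ y : Hn n, Admissible y →
        cost tb ε γ x ≤ cost tb ε γ y) →
      ∀ i, (enorm2 (x.1 i)) ^ 2 ≤ (∑ j, ∫ s, (tb j s) ^ 2 ∂mu01) / γ) := by
  constructor
  · -- existence of a minimizer
    set S : Set ℝ := cost tb ε γ '' {x : Hn n | Admissible x} with hS
    have hSne : S.Nonempty := ⟨_, ⟨zeroX, zeroX_admissible, rfl⟩⟩
    have hSbdd : BddBelow S := ⟨0, by rintro c ⟨x, hx, rfl⟩; exact cost_nonneg hε.le hγ.le x⟩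
    set m := sInf S with hm
    have hm_le : ∀ y : Hn n, Admissible y → m ≤ cost tb ε γ y :=
      fun y hy => csInf_le hSbdd ⟨y, hy, rfl⟩
    have hm0 : 0 ≤ m :=
      le_csInf hSne (by rintro c ⟨x, hx, rfl⟩; exact cost_nonneg hε.le hγ.le x)
    have hseq : ∀ k : ℕ, ∃ x : Hn n, Admissible x ∧ cost tb ε γ x < m + 1/((k:ℝ)+1) := by
      intro k
      obtain ⟨c, ⟨x, hx, rfl⟩, hck⟩ := exists_lt_of_csInf_lt hSne
        (lt_add_of_pos_right m (show (0:ℝ) < 1/((k:ℝ)+1) by positivity))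
      exact ⟨x, hx, hck⟩
    choose X hXadm hXcost using hseq
    have hone : ∀ k : ℕ, 1/((k:ℝ)+1) ≤ 1 := by
      intro k
      rw [div_le_one (by positivity)]
      linarith [Nat.cast_nonneg (α := ℝ) k]
    have hcostle : ∀ k, cost tb ε γ (X k) ≤ m + 1 := fun k =>
      (hXcost k).le.trans (by linarith [hone k])
    set K := m + 1 with hK
    have hK0 : 0 < K := by rw [hK]; linarith
    set Cp : ℝ := Real.sqrt (2 * K / γ) with hCp
    have hCp0 : 0 ≤ Cp := by rw [hCp]; exact Real.sqrt_nonneg _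
    have hple : ∀ k i, enorm2 ((X k).1 i) ≤ Cp := by
      intro k i
      have h1 := gamma_term_le (tb := tb) hε.le hγ.le (X k) i
      have h2 : (enorm2 ((X k).1 i))^2 ≤ 2*K/γ := by
        rw [le_div_iff₀ hγ]; nlinarith [hcostle k]
      calc enorm2 ((X k).1 i) = Real.sqrt ((enorm2 ((X k).1 i))^2) :=
            (Real.sqrt_sq (enorm2_nonneg _)).symm
      _ ≤ Cp := by rw [hCp]; exact Real.sqrt_le_sqrt h2
    have hgle : ∀ k i, ‖(X k).2.2 i‖ ≤ Cp := fun k i =>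
      (norm_le_of_isStateSol (hXadm k i)).trans (hple k i)
    set Ca : ℝ := Real.sqrt (2*K/ε) with hCa
    have hale : ∀ k, ‖(X k).2.1‖ ≤ Ca := by
      intro k
      have h1 := alpha_term_le (tb := tb) hε.le hγ.le (X k)
      have h2 : ‖(X k).2.1‖^2 ≤ 2*K/ε := by rw [le_div_iff₀ hε]; nlinarith [hcostle k]
      calc ‖(X k).2.1‖ = Real.sqrt (‖(X k).2.1‖^2) := (Real.sqrt_sq (norm_nonneg _)).symm
      _ ≤ Ca := by rw [hCa]; exact Real.sqrt_le_sqrt h2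
    have hCa0 : 0 ≤ Ca := by rw [hCa]; exact Real.sqrt_nonneg _
    -- extraction 1 : the fields p
    have hpbdd : ∀ k, (X k).1 ∈ Metric.closedBall (0 : Fin n → ℝ × ℝ) Cp := by
      intro k
      rw [Metric.mem_closedBall, dist_zero_right]
      exact (pi_norm_le_iff_of_nonneg hCp0).2 fun i => (norm_le_enorm2 _).trans (hple k i)
    obtain ⟨pl, -, φ₁, hφ₁, hptend⟩ :=
      tendsto_subseq_of_bounded (Metric.isBounded_closedBall) hpbdd
    -- extraction 2 : the design α
    obtain ⟨al, φ₂, hφ₂, -, hwa⟩ := weak_bw hCa0 (fun k => (X (φ₁ k)).2.1)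
      (fun k => hale _)
    -- extraction 3 : the states ϑ
    obtain ⟨gl, φ₃, hφ₃, -, hwg⟩ := weak_bw_fin n hCp0 (fun k => (X (φ₁ (φ₂ k))).2.2)
      (fun k i => hgle _ i)
    set φ : ℕ → ℕ := φ₁ ∘ (φ₂ ∘ φ₃) with hφdef
    have hφ : StrictMono φ := hφ₁.comp (hφ₂.comp hφ₃)
    set Y : ℕ → Hn n := fun k => X (φ k) with hY
    have hptend' : Tendsto (fun k => (Y k).1) atTop (𝓝 pl) :=
      hptend.comp ((hφ₂.comp hφ₃).tendsto_atTop)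
    have hpi : ∀ i, Tendsto (fun k => (Y k).1 i) atTop (𝓝 (pl i)) :=
      fun i => (tendsto_pi_nhds.1 hptend') i
    have hwa' : ∀ w : E, Tendsto (fun k => (inner ℝ ((Y k).2.1) w : ℝ)) atTop
        (𝓝 (inner ℝ al w : ℝ)) := fun w => (hwa w).comp hφ₃.tendsto_atTop
    have hadm : Admissible (⟨pl, al, gl⟩ : Hn n) := by
      intro i
      exact isStateSol_limit (hpi i) (fun k => hple (φ k) i) hwa' (fun w => hwg i w)
        (fun k => hXadm (φ k) i)
    refine ⟨⟨pl, al, gl⟩, hadm, ?_⟩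
    have key : cost tb ε γ (⟨pl, al, gl⟩ : Hn n) ≤ m := by
      set q : ℝ := ‖al‖^2 with hq
      have hTk : Tendsto (fun k => (1/2) * ∑ i, (∫ s, (U ((Y k).2.2 i) s - tb i s)^2 ∂mu01))
          atTop (𝓝 ((1/2) * ∑ i, (∫ s, (U (gl i) s - tb i s)^2 ∂mu01))) := by
        refine Tendsto.const_mul _ (tendsto_finset_sum _ fun i _ => ?_)
        exact tendsto_tracking (htb i) (fun k => hgle (φ k) i) (fun w => hwg i w)
      have hGk : Tendsto (fun k => (γ/2) * ∑ i, (enorm2 ((Y k).1 i))^2) atTop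
          (𝓝 ((γ/2) * ∑ i, (enorm2 (pl i))^2)) := by
        refine Tendsto.const_mul _ (tendsto_finset_sum _ fun i _ => ?_)
        exact ((continuous_enorm2.tendsto _).comp (hpi i)).pow 2
      have hip : Tendsto (fun k => (inner ℝ ((Y k).2.1) al : ℝ)) atTop (𝓝 q) := by
        have h1 := hwa' al
        rwa [real_inner_self_eq_norm_sq, ← hq] at h1
      have hbk : Tendsto (fun k => (ε/2) * ((inner ℝ ((Y k).2.1) al : ℝ))^2 / q) atTop
          (𝓝 ((ε/2) * q)) := by
        have h1 : Tendsto (fun k => (ε/2) * ((inner ℝ ((Y k).2.1) al : ℝ))^2 / q) atTop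
            (𝓝 ((ε/2) * q^2 / q)) := ((hip.pow 2).const_mul (ε/2)).div_const q
        have h2 : (ε/2) * q^2 / q = (ε/2) * q := by
          rcases eq_or_ne q 0 with h | h
          · rw [h]; simp
          · field_simp
        rwa [h2] at h1
      have hble : ∀ k, (ε/2) * ((inner ℝ ((Y k).2.1) al : ℝ))^2 / q
          ≤ (ε/2) * ‖(Y k).2.1‖^2 := by
        intro k
        rcases eq_or_ne q 0 with h | h
        · have hal : al = 0 := by
            have h3 : ‖al‖^2 = 0 := hq.symm.trans h
            have h4 : ‖al‖ = 0 := by nlinarith [norm_nonneg al]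
            exact norm_eq_zero.1 h4
          rw [hal, h]
          simp only [inner_zero_right]
          simp
          positivity
        · have hq0 : 0 < q := lt_of_le_of_ne (hq ▸ sq_nonneg _) (Ne.symm h)
          rw [div_le_iff₀ hq0]
          have h5 := abs_real_inner_le_norm ((Y k).2.1) al
          have h2 : ((inner ℝ ((Y k).2.1) al : ℝ))^2 ≤ ‖(Y k).2.1‖^2 * q := by
            rw [hq]
            nlinarith [abs_nonneg (inner ℝ ((Y k).2.1) al : ℝ),
              sq_abs (inner ℝ ((Y k).2.1) al : ℝ), norm_nonneg ((Y k).2.1), norm_nonneg al]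
          nlinarith
      have hsum : ∀ k, (1/2) * ∑ i, (∫ s, (U ((Y k).2.2 i) s - tb i s)^2 ∂mu01)
          + (ε/2) * ((inner ℝ ((Y k).2.1) al : ℝ))^2 / q
          + (γ/2) * ∑ i, (enorm2 ((Y k).1 i))^2 ≤ m + 1/((k:ℝ)+1) := by
        intro k
        have h1 := (hXcost (φ k)).le
        have h2 : cost tb ε γ (Y k)
            = (1/2) * ∑ i, (∫ s, (U ((Y k).2.2 i) s - tb i s)^2 ∂mu01)
            + (ε/2) * ‖(Y k).2.1‖^2
            + (γ/2) * ∑ i, (enorm2 ((Y k).1 i))^2 := by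
          rw [cost, integral_sq_eq]
        have h3 : 1/((φ k:ℝ)+1) ≤ 1/((k:ℝ)+1) := by
          apply one_div_le_one_div_of_le (by positivity)
          have h4 : k ≤ φ k := hφ.le_apply
          have h5 : (k:ℝ) ≤ (φ k : ℝ) := by exact_mod_cast h4
          linarith
        have h6 := hble k
        rw [h2] at h1
        linarith
      have hlhs : Tendsto (fun k => (1/2) * ∑ i, (∫ s, (U ((Y k).2.2 i) s - tb i s)^2 ∂mu01)
          + (ε/2) * ((inner ℝ ((Y k).2.1) al : ℝ))^2 / q
          + (γ/2) * ∑ i, (enorm2 ((Y k).1 i))^2) atTop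
          (𝓝 (cost tb ε γ (⟨pl, al, gl⟩ : Hn n))) := by
        have h7 : cost tb ε γ (⟨pl, al, gl⟩ : Hn n)
            = (1/2) * ∑ i, (∫ s, (U (gl i) s - tb i s)^2 ∂mu01)
            + (ε/2) * q + (γ/2) * ∑ i, (enorm2 (pl i))^2 := by
          rw [cost, integral_sq_eq, hq]
        rw [h7]
        exact (hTk.add hbk).add hGk
      have hrhs : Tendsto (fun k : ℕ => m + 1/((k:ℝ)+1)) atTop (𝓝 m) := by
        have := tendsto_one_div_add_atTop_nhds_zero_nat (𝕜 := ℝ)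
        simpa using tendsto_const_nhds.add this
      exact le_of_tendsto_of_tendsto' hlhs hrhs hsum
    exact fun y hy => key.trans (hm_le y hy)
  · -- the bound on minimizers
    intro x hx hmin i
    have h0 := hmin zeroX zeroX_admissible
    rw [cost_zeroX] at h0
    have h1 := gamma_term_le (tb := tb) hε.le hγ.le x i
    rw [le_div_iff₀ hγ]
    nlinarith
end

section
/- Let n = 1 and let ϑ̄ ∈ H³(I) satisfy ϑ̄(0)=0 and ϑ̄'(1)=0. Then ϑ̄ is attainable: there exist h̄ ∈ ℝ² and ᾱ ∈ H^1_{0L}(I) such that ϑ̄ solves −ϑ̄'' − h̄·Dm(ᾱ+ϑ̄) = 0 in I together with ϑ̄(0)=0 and ϑ̄'(1)=0. Explicitly, for any H > max_{s∈[0,1]}|ϑ̄''(s)| one may take h̄ = (H cos ψ, H sin ψ) with ψ = −arcsin(ϑ̄''(0)/H) and ᾱ(s) = arcsin(ϑ̄''(s)/H) − ϑ̄(s) + ψ. -/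
open MeasureTheory Set
open intervalIntegral

lemma key_ftc (w v ψd Φ : ℝ → ℝ) (hw : IntervalIntegrable w volume 0 1)
    (hv : ∀ t ∈ Icc (0:ℝ) 1, v t = v 0 + ∫ s in (0:ℝ)..t, w s)
    (hψc : Continuous ψd) (B L : ℝ) (hB0 : 0 ≤ B) (hL0 : 0 ≤ L)
    (hB : ∀ x, |ψd x| ≤ B) (hlip : ∀ a b : ℝ, |ψd a - ψd b| ≤ L * |a - b|)
    (hΦ : ∀ x, HasDerivAt Φ (ψd x) x)
    {t : ℝ} (ht : t ∈ Icc (0:ℝ) 1) :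
    ∫ s in (0:ℝ)..t, ψd (v s) * w s = Φ (v t) - Φ (v 0) := by
  obtain ⟨ht0, ht1⟩ := ht
  have hu01 : uIcc (0:ℝ) 1 = Icc 0 1 := uIcc_of_le zero_le_one
  have hsub_t : uIcc (0:ℝ) t ⊆ uIcc (0:ℝ) 1 := by
    rw [hu01, uIcc_of_le ht0]; exact Icc_subset_Icc le_rfl ht1
  -- continuity of v on [0,1]
  have hvc : ContinuousOn v (Icc 0 1) := by
    have h1 : ContinuousOn (fun t => v 0 + ∫ s in (0:ℝ)..t, w s) (Icc 0 1) := by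
      refine continuousOn_const.add ?_
      have := continuousOn_primitive_interval' hw
        (by rw [hu01]; exact ⟨le_rfl, zero_le_one⟩)
      rwa [hu01] at this
    exact h1.congr hv
  set W : ℝ := ∫ s in (0:ℝ)..1, |w s| with hWdef
  have hW0 : 0 ≤ W := integral_nonneg zero_le_one (fun u _ => abs_nonneg _)
  set X : ℝ := ∫ s in (0:ℝ)..t, ψd (v s) * w s with hX
  set Y : ℝ := Φ (v t) - Φ (v 0) with hY
  suffices h : ∀ ε : ℝ, 0 < ε → |X - Y| ≤ ε by
    by_contra hne
    have hp : 0 < |X - Y| := abs_pos.2 (sub_ne_zero.2 hne)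
    have := h (|X - Y| / 2) (by linarith)
    linarith
  intro ε hε
  set δ : ℝ := ε / (2 * B + L * W + 1) with hδdef
  have hden : 0 < 2 * B + L * W + 1 := by positivity
  have hδ : 0 < δ := div_pos hε hden
  -- approximate w in L¹ by a continuous g
  set w' : ℝ → ℝ := (Ioc (0:ℝ) 1).indicator w with hw'def
  have hwOn : IntegrableOn w (Ioc (0:ℝ) 1) volume :=
    (intervalIntegrable_iff_integrableOn_Ioc_of_le zero_le_one).mp hw
  have hw' : Integrable w' volume := hwOn.integrable_indicator measurableSet_Ioc
  obtain ⟨g, -, hgdist, hgcont, hgint⟩ := hw'.exists_hasCompactSupport_integral_sub_le hδ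
  have hgii : IntervalIntegrable g volume 0 1 := hgcont.intervalIntegrable 0 1
  have hwg : IntervalIntegrable (fun s => w s - g s) volume 0 1 := hw.sub hgii
  have hdist01 : (∫ s in (0:ℝ)..1, |w s - g s|) ≤ δ := by
    have e1 : (∫ s in (0:ℝ)..1, |w s - g s|) = ∫ s in Ioc (0:ℝ) 1, |w s - g s| :=
      integral_of_le zero_le_one
    have e2 : (∫ s in Ioc (0:ℝ) 1, |w s - g s|) = ∫ s in Ioc (0:ℝ) 1, ‖w' s - g s‖ := by
      refine setIntegral_congr_fun measurableSet_Ioc (fun x hx => ?_)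
      rw [Real.norm_eq_abs, hw'def, indicator_of_mem hx]
    have e3 : (∫ s in Ioc (0:ℝ) 1, ‖w' s - g s‖) ≤ ∫ s, ‖w' s - g s‖ :=
      integral_mono_measure Measure.restrict_le_self
        (Filter.Eventually.of_forall fun x => norm_nonneg _) (hw'.sub hgint).norm
    rw [e1, e2]; exact e3.trans hgdist
  -- approximate primitive
  set vg : ℝ → ℝ := fun r => v 0 + ∫ u in (0:ℝ)..r, g u with hvgdef
  have hvg' : ∀ r : ℝ, HasDerivAt vg (g r) r := fun r =>
    ((hgcont.integral_hasStrictDerivAt 0 r).hasDerivAt).const_add (v 0)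
  have hvgcont : Continuous vg := by
    have hd : Differentiable ℝ vg := fun r => (hvg' r).differentiableAt
    exact hd.continuous
  have hvg0 : vg 0 = v 0 := by simp [hvgdef]
  have hclose : ∀ s ∈ Icc (0:ℝ) 1, |v s - vg s| ≤ δ := by
    intro s hs
    have hsub : uIcc (0:ℝ) s ⊆ uIcc (0:ℝ) 1 := by
      rw [hu01, uIcc_of_le hs.1]; exact Icc_subset_Icc le_rfl hs.2
    have h1 : v s - vg s = ∫ u in (0:ℝ)..s, (w u - g u) := by
      rw [hv s hs, hvgdef]
      simp only
      rw [integral_sub (hw.mono_set hsub) (hgii.mono_set hsub)]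
      ring
    rw [h1]
    calc |∫ u in (0:ℝ)..s, (w u - g u)| ≤ ∫ u in (0:ℝ)..s, |w u - g u| :=
          abs_integral_le_integral_abs hs.1
      _ ≤ ∫ u in (0:ℝ)..1, |w u - g u| :=
          integral_mono_interval le_rfl hs.1 hs.2
            (Filter.Eventually.of_forall fun x => abs_nonneg _) hwg.abs
      _ ≤ δ := hdist01
  -- FTC for the approximation
  have hXg : ∫ s in (0:ℝ)..t, ψd (vg s) * g s = Φ (vg t) - Φ (vg 0) := by
    have := integral_eq_sub_of_hasDerivAt
      (f := Φ ∘ vg) (f' := fun s => ψd (vg s) * g s)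
      (fun s _ => (hΦ (vg s)).comp s (hvg' s))
      (((hψc.comp hvgcont).mul hgcont).intervalIntegrable 0 t)
    simpa using this
  have hIvg : IntervalIntegrable (fun s => ψd (vg s) * g s) volume 0 t :=
    ((hψc.comp hvgcont).mul hgcont).intervalIntegrable 0 t
  have hIv : IntervalIntegrable (fun s => ψd (v s) * w s) volume 0 t := by
    have hcc : ContinuousOn (fun s => ψd (v s)) (uIcc (0:ℝ) t) :=
      hψc.comp_continuousOn ((hvc.mono (by rw [← hu01]; exact hsub_t)))
    exact (hw.mono_set hsub_t).continuousOn_mul hcc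
  -- E1 : endpoint error
  have hE1 : |Φ (v t) - Φ (vg t)| ≤ B * δ := by
    have h2 : ∫ x in vg t..v t, ψd x = Φ (v t) - Φ (vg t) :=
      integral_eq_sub_of_hasDerivAt (fun x _ => hΦ x) (hψc.intervalIntegrable _ _)
    rw [← h2]
    have h3 : ‖∫ x in vg t..v t, ψd x‖ ≤ B * |v t - vg t| :=
      intervalIntegral.norm_integral_le_of_norm_le_const
        (fun x _ => by rw [Real.norm_eq_abs]; exact hB x)
    rw [Real.norm_eq_abs] at h3
    exact h3.trans (mul_le_mul_of_nonneg_left (hclose t ⟨ht0, ht1⟩) hB0)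
  -- E2 : integral error
  have hE2 : |X - (Φ (vg t) - Φ (vg 0))| ≤ B * δ + L * δ * W := by
    rw [← hXg, hX, ← integral_sub hIv hIvg]
    have hboundint : IntervalIntegrable (fun s => B * |w s - g s| + (L * δ) * |w s|)
        volume 0 t :=
      ((hwg.abs.const_mul B).add (hw.abs.const_mul (L * δ))).mono_set hsub_t
    calc |∫ s in (0:ℝ)..t, (ψd (v s) * w s - ψd (vg s) * g s)|
        ≤ ∫ s in (0:ℝ)..t, |ψd (v s) * w s - ψd (vg s) * g s| :=
          abs_integral_le_integral_abs ht0
      _ ≤ ∫ s in (0:ℝ)..t, (B * |w s - g s| + (L * δ) * |w s|) := by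
          refine integral_mono_on ht0 (hIv.sub hIvg).abs hboundint (fun s hs => ?_)
          have hsin : s ∈ Icc (0:ℝ) 1 := ⟨hs.1, hs.2.trans ht1⟩
          have hd : ψd (v s) * w s - ψd (vg s) * g s
              = ψd (vg s) * (w s - g s) + (ψd (v s) - ψd (vg s)) * w s := by ring
          rw [hd]
          refine (abs_add_le _ _).trans (add_le_add ?_ ?_)
          · rw [abs_mul]
            exact mul_le_mul_of_nonneg_right (hB _) (abs_nonneg _)
          · rw [abs_mul]
            refine mul_le_mul_of_nonneg_right ?_ (abs_nonneg _)
            exact (hlip _ _).trans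
              (mul_le_mul_of_nonneg_left (hclose s hsin) hL0)
      _ = B * (∫ s in (0:ℝ)..t, |w s - g s|) + (L * δ) * (∫ s in (0:ℝ)..t, |w s|) := by
          rw [integral_add ((hwg.abs.const_mul B).mono_set hsub_t)
            ((hw.abs.const_mul (L * δ)).mono_set hsub_t),
            intervalIntegral.integral_const_mul, intervalIntegral.integral_const_mul]
      _ ≤ B * δ + (L * δ) * W := by
          have b1 : (∫ s in (0:ℝ)..t, |w s - g s|) ≤ δ :=
            (integral_mono_interval le_rfl ht0 ht1
              (Filter.Eventually.of_forall fun x => abs_nonneg _) hwg.abs).trans hdist01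
          have b2 : (∫ s in (0:ℝ)..t, |w s|) ≤ W :=
            integral_mono_interval le_rfl ht0 ht1
              (Filter.Eventually.of_forall fun x => abs_nonneg _) hw.abs
          have hLδ : 0 ≤ L * δ := mul_nonneg hL0 hδ.le
          exact add_le_add (mul_le_mul_of_nonneg_left b1 hB0)
            (mul_le_mul_of_nonneg_left b2 hLδ)
      _ = B * δ + L * δ * W := by ring
  -- combine
  have hfin : |X - Y| ≤ (2 * B + L * W) * δ := by
    have : X - Y = (X - (Φ (vg t) - Φ (vg 0))) - (Φ (v t) - Φ (vg t)) := by
      rw [hY, hvg0]; ring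
    rw [this]
    calc |(X - (Φ (vg t) - Φ (vg 0))) - (Φ (v t) - Φ (vg t))|
        ≤ |X - (Φ (vg t) - Φ (vg 0))| + |Φ (v t) - Φ (vg t)| := abs_sub _ _
      _ ≤ (B * δ + L * δ * W) + B * δ := add_le_add hE2 hE1
      _ = (2 * B + L * W) * δ := by ring
  have : (2 * B + L * W) * δ ≤ ε := by
    rw [hδdef]
    calc (2 * B + L * W) * (ε / (2 * B + L * W + 1))
        ≤ (2 * B + L * W + 1) * (ε / (2 * B + L * W + 1)) :=
          mul_le_mul_of_nonneg_right (by linarith) (by positivity)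
      _ = ε := by field_simp
  exact hfin.trans this


/-- Theorem `min` (iii): for `n = 1`, any target `ϑ̄ ∈ H³(I)` with
`ϑ̄(0) = 0`, `ϑ̄'(1) = 0` is attainable.  Explicitly: an intensity `H > max_{[0,1]}|ϑ̄''|`
exists, and for any such `H`, taking `ψ = −arcsin(ϑ̄''(0)/H)`, `h̄ = (H cos ψ, H sin ψ)`
and `ᾱ(s) = arcsin(ϑ̄''(s)/H) − ϑ̄(s) + ψ`, one has `ᾱ(0) = 0`, `ᾱ ∈ H^1_{0L}(I)`, and
`−ϑ̄'' − h̄·Dm(ᾱ+ϑ̄) = 0` on `[0,1]`. -/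
theorem target_attainable
    (θb θb' θb'' θb''' : ℝ → ℝ)
    -- `ϑ̄ ∈ H³(I)`, recorded through its three successive weak derivatives:
    (hi1 : IntervalIntegrable θb' volume 0 1)
    (hi2 : IntervalIntegrable θb'' volume 0 1)
    (hi3 : IntervalIntegrable θb''' volume 0 1)
    (hsq1 : IntervalIntegrable (fun s => (θb' s) ^ 2) volume 0 1)
    (hsq2 : IntervalIntegrable (fun s => (θb'' s) ^ 2) volume 0 1)
    (hsq3 : IntervalIntegrable (fun s => (θb''' s) ^ 2) volume 0 1)
    (hr1 : ∀ t ∈ Icc (0 : ℝ) 1, θb t = θb 0 + ∫ s in (0 : ℝ)..t, θb' s)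
    (hr2 : ∀ t ∈ Icc (0 : ℝ) 1, θb' t = θb' 0 + ∫ s in (0 : ℝ)..t, θb'' s)
    (hr3 : ∀ t ∈ Icc (0 : ℝ) 1, θb'' t = θb'' 0 + ∫ s in (0 : ℝ)..t, θb''' s)
    -- the boundary conditions:
    (hbc0 : θb 0 = 0) (hbc1 : θb' 1 = 0) :
    -- an admissible intensity `H` exists:
    (∃ H : ℝ, 0 < H ∧ ∀ s ∈ Icc (0 : ℝ) 1, |θb'' s| < H) ∧
    -- and for any such `H` the explicit design and control attain the target:
    (∀ H : ℝ, 0 < H → (∀ s ∈ Icc (0 : ℝ) 1, |θb'' s| < H) →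
      ∀ ψ : ℝ, ψ = -Real.arcsin (θb'' 0 / H) →
      ∀ αb : ℝ → ℝ, (∀ s, αb s = Real.arcsin (θb'' s / H) - θb s + ψ) →
        -- `ᾱ(0) = 0` and `ᾱ ∈ H^1_{0L}(I)`:
        αb 0 = 0 ∧
        (∃ αb' : ℝ → ℝ, IntervalIntegrable αb' volume 0 1 ∧
          IntervalIntegrable (fun s => (αb' s) ^ 2) volume 0 1 ∧
          ∀ t ∈ Icc (0 : ℝ) 1, αb t = ∫ s in (0 : ℝ)..t, αb' s) ∧
        -- the state equation holds with `h̄ = (H cos ψ, H sin ψ)`: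
        ∀ s ∈ Icc (0 : ℝ) 1,
          -θb'' s - edot (H * Real.cos ψ, H * Real.sin ψ) (Dmvec (αb s + θb s)) = 0) := by
  have hu01 : uIcc (0:ℝ) 1 = Icc 0 1 := uIcc_of_le zero_le_one
  -- continuity of θb'' on [0,1]
  have hc2 : ContinuousOn θb'' (Icc 0 1) := by
    have h1 : ContinuousOn (fun t => θb'' 0 + ∫ s in (0:ℝ)..t, θb''' s) (Icc 0 1) := by
      refine continuousOn_const.add ?_
      have := continuousOn_primitive_interval' hi3
        (by rw [hu01]; exact ⟨le_rfl, zero_le_one⟩)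
      rwa [hu01] at this
    exact h1.congr hr3
  -- the maximum of |θb''| on [0,1]
  obtain ⟨s₀, hs₀, hmax⟩ := isCompact_Icc.exists_isMaxOn (nonempty_Icc.mpr zero_le_one) hc2.abs
  set K0 : ℝ := |θb'' s₀| with hK0def
  have hbound : ∀ s ∈ Icc (0:ℝ) 1, |θb'' s| ≤ K0 := fun s hs => hmax hs
  have hK00 : 0 ≤ K0 := abs_nonneg _
  constructor
  · exact ⟨K0 + 1, by positivity, fun s hs => lt_of_le_of_lt (hbound s hs) (by linarith)⟩
  intro H hH hHb ψ hψ αb hα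
  have hK0H : K0 < H := hHb s₀ hs₀
  -- the clamped derivative of arcsin(·/H)
  set d : ℝ := H^2 - K0^2 with hddef
  have hd : 0 < d := by nlinarith
  set clampf : ℝ → ℝ := fun u => max (min u K0) (-K0) with hclampdef
  have hclmem : ∀ u, -K0 ≤ clampf u ∧ clampf u ≤ K0 := fun u =>
    ⟨le_max_right _ _, max_le (min_le_right _ _) (by linarith)⟩
  have hcleq : ∀ u, |u| ≤ K0 → clampf u = u := by
    intro u hu
    obtain ⟨hu1, hu2⟩ := abs_le.mp hu
    rw [hclampdef]; simp only [min_eq_left hu2, max_eq_left hu1]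
  have hcllip : ∀ a b : ℝ, |clampf a - clampf b| ≤ |a - b| := by
    intro a b
    refine (abs_max_sub_max_le_abs _ _ _).trans ?_
    simpa using abs_min_sub_min_le_max a K0 b K0
  have hXge : ∀ u, d ≤ H^2 - (clampf u)^2 := by
    intro u; obtain ⟨h1, h2⟩ := hclmem u; nlinarith
  have hXpos : ∀ u : ℝ, u ∈ Icc (-K0) K0 → 0 < H^2 - u^2 := by
    intro u hu; obtain ⟨h1, h2⟩ := hu; nlinarith
  set ψd : ℝ → ℝ := fun u => (Real.sqrt (H^2 - (clampf u)^2))⁻¹ with hψddef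
  have hsd : 0 < Real.sqrt d := Real.sqrt_pos.2 hd
  have hsq_pos : ∀ u, 0 < Real.sqrt (H^2 - (clampf u)^2) :=
    fun u => Real.sqrt_pos.2 (lt_of_lt_of_le hd (hXge u))
  set B : ℝ := (Real.sqrt d)⁻¹ with hBdef
  have hB0 : 0 ≤ B := inv_nonneg.2 (Real.sqrt_nonneg _)
  have hψB : ∀ u, |ψd u| ≤ B := by
    intro u
    rw [hψddef]; simp only
    rw [abs_of_nonneg (inv_nonneg.2 (Real.sqrt_nonneg _))]
    exact inv_anti₀ hsd (Real.sqrt_le_sqrt (hXge u))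
  have hclcont : Continuous clampf := (continuous_id.min continuous_const).max continuous_const
  have hψcont : Continuous ψd := by
    refine Continuous.inv₀ ?_ (fun u => (hsq_pos u).ne')
    exact Real.continuous_sqrt.comp (continuous_const.sub (hclcont.pow 2))
  -- Lipschitz bound for ψd
  set L : ℝ := K0 / (Real.sqrt d * d) with hLdef
  have hL0 : 0 ≤ L := div_nonneg hK00 (by positivity)
  have hbase : ∀ x ∈ Icc (-K0) K0, ∀ y ∈ Icc (-K0) K0,
      |(Real.sqrt (H^2 - y^2))⁻¹ - (Real.sqrt (H^2 - x^2))⁻¹| ≤ L * |y - x| := by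
    intro x hx y hy
    have hmvt := Convex.norm_image_sub_le_of_norm_hasDerivWithin_le
      (f := fun u => (Real.sqrt (H^2 - u^2))⁻¹)
      (f' := fun u => u / (Real.sqrt (H^2 - u^2) * (H^2 - u^2)))
      (s := Icc (-K0) K0) (C := L) ?_ ?_ (convex_Icc _ _) hx hy
    · simpa [Real.norm_eq_abs] using hmvt
    · intro u hu
      have hXu : 0 < H^2 - u^2 := hXpos u hu
      have hsu : 0 < Real.sqrt (H^2 - u^2) := Real.sqrt_pos.2 hXu
      have h1 : HasDerivAt (fun u : ℝ => H^2 - u^2) (-(2*u)) u := by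
        simpa using (hasDerivAt_pow 2 u).const_sub (H^2)
      have h2 : HasDerivAt (fun u : ℝ => Real.sqrt (H^2 - u^2))
          (1 / (2 * Real.sqrt (H^2 - u^2)) * (-(2*u))) u :=
        (Real.hasDerivAt_sqrt hXu.ne').comp u h1
      have h3 := h2.inv hsu.ne'
      have heq : -(1 / (2 * Real.sqrt (H^2 - u^2)) * (-(2*u))) / (Real.sqrt (H^2 - u^2))^2
          = u / (Real.sqrt (H^2 - u^2) * (H^2 - u^2)) := by
        rw [Real.sq_sqrt hXu.le]
        field_simp
      rw [heq] at h3
      exact h3.hasDerivWithinAt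
    · intro u hu
      have hXu : 0 < H^2 - u^2 := hXpos u hu
      have hsu : 0 < Real.sqrt (H^2 - u^2) := Real.sqrt_pos.2 hXu
      have hXd : d ≤ H^2 - u^2 := by obtain ⟨h1, h2⟩ := hu; nlinarith
      have hsud : Real.sqrt d ≤ Real.sqrt (H^2 - u^2) := Real.sqrt_le_sqrt hXd
      have huK : |u| ≤ K0 := abs_le.mpr ⟨hu.1, hu.2⟩
      rw [Real.norm_eq_abs, hLdef, abs_div,
        abs_of_pos (mul_pos hsu hXu)]
      exact div_le_div₀ hK00 huK (by positivity) (mul_le_mul hsud hXd hd.le (Real.sqrt_nonneg _))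
  have hlip : ∀ a b : ℝ, |ψd a - ψd b| ≤ L * |a - b| := by
    intro a b
    have h1 := hbase (clampf b) ⟨(hclmem b).1, (hclmem b).2⟩ (clampf a) ⟨(hclmem a).1, (hclmem a).2⟩
    refine h1.trans ?_
    exact mul_le_mul_of_nonneg_left (hcllip a b) hL0
  -- the primitive Φ of ψd
  set Φ : ℝ → ℝ := fun u => ∫ x in (0:ℝ)..u, ψd x with hΦdef
  have hΦ : ∀ x, HasDerivAt Φ (ψd x) x := fun x =>
    (hψcont.integral_hasStrictDerivAt 0 x).hasDerivAt
  have hΦeq : ∀ u : ℝ, |u| ≤ K0 → Φ u = Real.arcsin (u / H) := by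
    intro u hu
    have hder : ∀ x ∈ uIcc (0:ℝ) u, HasDerivAt (fun y => Real.arcsin (y / H)) (ψd x) x := by
      intro x hx
      have hxK : |x| ≤ K0 := by
        rw [uIcc] at hx
        have h1 : -K0 ≤ min 0 u := le_min (by linarith) (by cases abs_le.mp hu; linarith)
        have h2 : max 0 u ≤ K0 := max_le hK00 ((le_abs_self u).trans hu)
        exact abs_le.mpr ⟨h1.trans hx.1, hx.2.trans h2⟩
      have hxHlt : |x / H| < 1 := by
        rw [abs_div, abs_of_pos hH, div_lt_one hH]
        exact lt_of_le_of_lt hxK hK0H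
      obtain ⟨hx1, hx2⟩ := abs_lt.mp hxHlt
      have ha := Real.hasDerivAt_arcsin hx1.ne' hx2.ne
      have hb : HasDerivAt (fun y : ℝ => y / H) (1 / H) x := by
        simpa using (hasDerivAt_id x).div_const H
      have hc := ha.comp x hb
      have hX : 0 < H^2 - x^2 := by
        have := lt_of_le_of_lt hxK hK0H
        have := neg_lt_of_abs_lt (lt_of_le_of_lt hxK hK0H)
        nlinarith [abs_lt.mp (lt_of_le_of_lt hxK hK0H)]
      have heq : 1 / Real.sqrt (1 - (x / H)^2) * (1 / H) = ψd x := by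
        rw [hψddef]; simp only [hcleq x hxK]
        have h5 : 1 - (x / H)^2 = (H^2 - x^2) / H^2 := by field_simp
        rw [h5, Real.sqrt_div hX.le, Real.sqrt_sq hH.le]
        have hsx : 0 < Real.sqrt (H^2 - x^2) := Real.sqrt_pos.2 hX
        field_simp
      rw [← heq]
      exact hc
    have hint := integral_eq_sub_of_hasDerivAt hder (hψcont.intervalIntegrable 0 u)
    rw [hΦdef]; simp only
    rw [hint]
    simp [Real.arcsin_zero]
  -- the weak derivative of αb
  set αb' : ℝ → ℝ := fun s => ψd (θb'' s) * θb''' s - θb' s with hαb'def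
  have hcψθ : ContinuousOn (fun s => ψd (θb'' s)) (uIcc (0:ℝ) 1) := by
    rw [hu01]; exact hψcont.comp_continuousOn hc2
  have hprod : IntervalIntegrable (fun s => ψd (θb'' s) * θb''' s) volume 0 1 :=
    hi3.continuousOn_mul hcψθ
  have hIαb' : IntervalIntegrable αb' volume 0 1 := hprod.sub hi1
  -- square integrability
  have hsqαb' : IntervalIntegrable (fun s => (αb' s) ^ 2) volume 0 1 := by
    have haesm : AEStronglyMeasurable αb' (volume.restrict (Set.uIoc (0:ℝ) 1)) :=
      hIαb'.def'.aestronglyMeasurable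
    have haesm2 : AEStronglyMeasurable (fun s => (αb' s) ^ 2)
        (volume.restrict (Set.uIoc (0:ℝ) 1)) := by
      have : (fun s => (αb' s) ^ 2) = fun s => αb' s * αb' s := by ext s; ring
      rw [this]; exact haesm.mul haesm
    have hg0 : IntervalIntegrable
        (fun s => 2 * B^2 * (θb''' s)^2 + 2 * (θb' s)^2) volume 0 1 :=
      (hsq3.const_mul (2 * B^2)).add (hsq1.const_mul 2)
    refine hg0.mono_fun haesm2 (Filter.Eventually.of_forall fun s => ?_)
    simp only [Real.norm_eq_abs]
    rw [abs_of_nonneg (sq_nonneg _), abs_of_nonneg (by positivity)]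
    set p := ψd (θb'' s)
    have hp2 : p^2 ≤ B^2 := by nlinarith [hψB (θb'' s), abs_nonneg p, sq_abs p]
    have h6 : p^2 * (θb''' s)^2 ≤ B^2 * (θb''' s)^2 :=
      mul_le_mul_of_nonneg_right hp2 (sq_nonneg _)
    rw [hαb'def]; simp only
    nlinarith [sq_nonneg (p * θb''' s + θb' s)]
  -- the state equation
  have hstate : ∀ s ∈ Icc (0:ℝ) 1,
      -θb'' s - edot (H * Real.cos ψ, H * Real.sin ψ) (Dmvec (αb s + θb s)) = 0 := by
    intro s hs
    have hsH : |θb'' s / H| ≤ 1 := by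
      rw [abs_div, abs_of_pos hH, div_le_one hH]
      exact (hHb s hs).le
    obtain ⟨h1, h2⟩ := abs_le.mp hsH
    have hsin : Real.sin (Real.arcsin (θb'' s / H)) = θb'' s / H := Real.sin_arcsin h1 h2
    have harg : αb s + θb s = Real.arcsin (θb'' s / H) + ψ := by rw [hα]; ring
    rw [harg]
    simp only [edot, Dmvec]
    rw [Real.sin_add, Real.cos_add, hsin]
    have hpy := Real.sin_sq_add_cos_sq ψ
    have hx : H * (θb'' s / H) = θb'' s := mul_div_cancel₀ _ hH.ne'
    linear_combination (Real.cos ψ ^ 2 + Real.sin ψ ^ 2) * hx + θb'' s * hpy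
  refine ⟨by rw [hα 0, hbc0, hψ]; ring, ⟨αb', hIαb', hsqαb', ?_⟩, hstate⟩
  -- the integral representation of αb
  intro t ht
  have hsubt : uIcc (0:ℝ) t ⊆ uIcc (0:ℝ) 1 := by
    rw [hu01, uIcc_of_le ht.1]; exact Icc_subset_Icc le_rfl ht.2
  have hkey : ∫ s in (0:ℝ)..t, ψd (θb'' s) * θb''' s = Φ (θb'' t) - Φ (θb'' 0) :=
    key_ftc θb''' θb'' ψd Φ hi3 hr3 hψcont B L hB0 hL0 hψB hlip hΦ ht
  have e2 : ∫ s in (0:ℝ)..t, θb' s = θb t - θb 0 := by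
    have := hr1 t ht; linarith
  rw [hαb'def]
  simp only
  rw [integral_sub (hprod.mono_set hsubt) (hi1.mono_set hsubt), hkey,
    hΦeq _ (hbound t ht), hΦeq _ (hbound 0 ⟨le_rfl, zero_le_one⟩), e2, hα t, hψ, hbc0]
  ring
end
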